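/- Let v ∈ ℝⁿ be a fixed nonzero vector, let m > 1 be an integer, let c ≥ 4, and let A ∈ ℝ^{m×n} have i.i.d. N(0, 1/m) entries. Then Pr_A[ ‖Av‖ ≤ (2/√c)·‖v‖ ] ≤ (2/√(mπ)) · (2e/√c)^m. -/

import Mathlib

open MeasureTheory ProbabilityTheory ENNReal
open scoped NNReal

noncomputable section

/-- `ℝⁿ` with the `ℓ₂` norm. -/
abbrev EucSp (n : ℕ) : Type := EuclideanSpace ℝ (Fin n)

/-- `m × n` real matrices, as functions (so that the product measurable structure is found). -/
abbrev MatR (m n : ℕ) : Type := Fin m → Fin n → ℝ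

/-- The `(η, δ)`-approximate covering number of a measure `R` on `ℝⁿ`: the least number of
closed `ℓ₂`-balls of radius `η` whose union has `R`-mass at least `1 - δ`. -/
def covNum {n : ℕ} (R : Measure (EucSp n)) (η δ : ℝ) : ℕ :=
  sInf {k : ℕ | ∃ s : Finset (EucSp n), s.card = k ∧
    ENNReal.ofReal (1 - δ) ≤ R (⋃ x ∈ s, Metric.closedBall x η)}

/-- `γ` is a coupling of `μ` and `ν`. -/
def IsCoupling {α : Type*} [MeasurableSpace α] (γ : Measure (α × α)) (μ ν : Measure α) : Prop :=
  γ.map Prod.fst = μ ∧ γ.map Prod.snd = ν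

/-- Wasserstein-`p` distance. -/
def wassDist {α : Type*} [MeasurableSpace α] [NormedAddCommGroup α]
    (p : ℝ) (μ ν : Measure α) : ℝ≥0∞ :=
  ⨅ γ ∈ {γ : Measure (α × α) | IsCoupling γ μ ν},
    (∫⁻ z, ENNReal.ofReal (‖z.1 - z.2‖ ^ p) ∂γ) ^ (1 / p)

/-- Wasserstein-`∞` distance. -/
def wassInf {α : Type*} [MeasurableSpace α] [NormedAddCommGroup α]
    (μ ν : Measure α) : ℝ≥0∞ :=
  ⨅ γ ∈ {γ : Measure (α × α) | IsCoupling γ μ ν},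
    essSup (fun z => ENNReal.ofReal ‖z.1 - z.2‖) γ

/-- Total variation distance between two measures. -/
def tvDist {α : Type*} [MeasurableSpace α] (μ ν : Measure α) : ℝ :=
  ⨆ s : {s : Set α // MeasurableSet s}, ((μ s.1).toReal - (ν s.1).toReal)

open Classical in
/-- Kullback-Leibler divergence (natural log), `∞` if not absolutely continuous/integrable. -/
def klDivE {α : Type*} [MeasurableSpace α] (μ ν : Measure α) : ℝ≥0∞ :=
  if μ ≪ ν ∧ Integrable (fun x => Real.log (μ.rnDeriv ν x).toReal) μ
  then ENNReal.ofReal (∫ x, Real.log (μ.rnDeriv ν x).toReal ∂μ) else ⊤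

/-- Shannon mutual information (in nats) between the two coordinates of a joint law. -/
def mutualInfoE {α β : Type*} [MeasurableSpace α] [MeasurableSpace β]
    (μ : Measure (α × β)) : ℝ≥0∞ :=
  klDivE μ ((μ.map Prod.fst).prod (μ.map Prod.snd))

/-- Mutual information in bits. -/
def mutualInfoBits {α β : Type*} [MeasurableSpace α] [MeasurableSpace β]
    (μ : Measure (α × β)) : ℝ≥0∞ :=
  mutualInfoE μ / ENNReal.ofReal (Real.log 2)

/-- Standard product Gaussian `N(0, v I_m)` on `ℝᵐ` (with the `ℓ₂` structure). -/
def gaussianVec (m : ℕ) (v : ℝ≥0) : Measure (EucSp m) :=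
  (Measure.pi fun _ : Fin m => gaussianReal 0 v).map
    (⇑(EuclideanSpace.equiv (Fin m) ℝ).symm)

/-- Law of an `m × n` random matrix with i.i.d. `N(0, 1/m)` entries. -/
def gaussMatrix (m n : ℕ) : Measure (MatR m n) :=
  Measure.pi fun _ : Fin m => Measure.pi fun _ : Fin n => gaussianReal 0 ((m : ℝ≥0)⁻¹)

/-- Apply a matrix to a vector of `ℝⁿ`, landing in `ℝᵐ` (`ℓ₂` structure on both sides). -/
def applyMat {m n : ℕ} (A : MatR m n) (x : EucSp n) : EucSp m :=
  (EuclideanSpace.equiv (Fin m) ℝ).symm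
    (fun i => ∑ j, A i j * (EuclideanSpace.equiv (Fin n) ℝ) x j)

/-- Maximum `ℓ₂` norm of a row of `A`. -/
def maxRowNorm {m n : ℕ} (A : MatR m n) : ℝ :=
  ⨆ i : Fin m, Real.sqrt (∑ j, (A i j) ^ 2)

/-- Joint law of `(x⋆, y)` where `x⋆ ∼ P` and `y = A x⋆ + ξ`,
`ξ ∼ N(0, (σ²/m) I_m)` independent of `x⋆`. -/
def jointXY {m n : ℕ} (P : Measure (EucSp n)) (A : MatR m n)
    (σ : ℝ) : Measure (EucSp n × EucSp m) :=
  (P.prod (gaussianVec m (Real.toNNReal (σ ^ 2 / m)))).map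
    (fun p => (p.1, applyMat A p.1 + p.2))

/-- Joint law of `(y, x⋆)`. -/
def jointYX {m n : ℕ} (P : Measure (EucSp n)) (A : MatR m n)
    (σ : ℝ) : Measure (EucSp m × EucSp n) :=
  (jointXY P A σ).map Prod.swap

/-- Law of the observation `y` alone. -/
def obsDist {m n : ℕ} (P : Measure (EucSp n)) (A : MatR m n)
    (σ : ℝ) : Measure (EucSp m) :=
  (jointXY P A σ).map Prod.snd

/-- `κ` is (a version of) the posterior/conditional distribution of the second coordinate given
the first, for the joint law `ρ`.  Sampling from `κ y` is posterior sampling. -/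
def IsPosterior {α β : Type*} [MeasurableSpace α] [MeasurableSpace β]
    (ρ : Measure (α × β)) (κ : Kernel α β) : Prop :=
  IsMarkovKernel κ ∧ ∀ s t : Set _, MeasurableSet s → MeasurableSet t →
    ρ (s ×ˢ t) = ∫⁻ y in s, κ y t ∂(ρ.map Prod.fst)


open Real

lemma meas_aux' {k : ℕ} (b a : ℝ) (w : Fin k → ℝ) :
    Measurable fun x : Fin k → ℝ => ENNReal.ofReal (rexp (-(b * (a + ∑ j, w j * x j) ^ 2))) := by
  fun_prop


lemma meas_aux (b a w : ℝ) : Measurable fun x : ℝ => ENNReal.ofReal (rexp (-(b * (a + w * x) ^ 2))) := by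
  fun_prop

lemma gauss_exp_sq_lintegral (b a w : ℝ) (hb : 0 ≤ b) (t : ℝ≥0) :
    ∫⁻ x, ENNReal.ofReal (rexp (-(b * (a + w * x) ^ 2))) ∂(gaussianReal 0 t)
      = ENNReal.ofReal (Real.sqrt (1 / (1 + 2 * b * t * w ^ 2)) *
          rexp (-(b * a ^ 2 / (1 + 2 * b * t * w ^ 2)))) := by
  rcases eq_or_ne t 0 with rfl | ht
  · rw [gaussianReal_zero_var]
    rw [lintegral_dirac' _ (meas_aux b a w)]
    norm_num
  · have hT : (0 : ℝ) < (t : ℝ) := by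
      simpa using (pos_iff_ne_zero.mpr ht : 0 < t)
    set T : ℝ := (t : ℝ) with hTdef
    set B : ℝ := b * w ^ 2 + 1 / (2 * T) with hBdef
    have hB : 0 < B := by positivity
    set d : ℝ := a * b * w / B with hddef
    set E : ℝ := -(a ^ 2 * b / (2 * T * B)) with hEdef
    have h2TB : 1 + 2 * b * T * w ^ 2 = 2 * T * B := by
      rw [hBdef, mul_add, mul_one_div_cancel (by positivity : (2 * T) ≠ 0)]
      ring
    -- pointwise identity
    have key : ∀ x : ℝ, gaussianPDFReal 0 t x * rexp (-(b * (a + w * x) ^ 2))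
        = (Real.sqrt (2 * π * T))⁻¹ * (rexp E * rexp (-(B * (x + d) ^ 2))) := by
      intro x
      rw [gaussianPDFReal]
      rw [mul_assoc, ← Real.exp_add, ← Real.exp_add]
      congr 2
      have hBne : B ≠ 0 := ne_of_gt hB
      have hTne : T ≠ 0 := ne_of_gt hT
      rw [hEdef, hddef, hBdef]
      field_simp
      ring
    rw [gaussianReal_of_var_ne_zero 0 ht]
    rw [lintegral_withDensity_eq_lintegral_mul _ (measurable_gaussianPDF 0 t) (meas_aux b a w)]
    have : ∀ x : ℝ, (gaussianPDF 0 t * fun x => ENNReal.ofReal (rexp (-(b * (a + w * x) ^ 2)))) x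
        = ENNReal.ofReal ((Real.sqrt (2 * π * T))⁻¹ * (rexp E * rexp (-(B * (x + d) ^ 2)))) := by
      intro x
      simp only [Pi.mul_apply, gaussianPDF]
      rw [← ENNReal.ofReal_mul (gaussianPDFReal_nonneg 0 t x), key x]
    simp only [this]
    -- compute the Bochner integral
    have hint : Integrable (fun x : ℝ => (Real.sqrt (2 * π * T))⁻¹ * (rexp E * rexp (-(B * (x + d) ^ 2)))) := by
      apply Integrable.const_mul
      apply Integrable.const_mul
      have : (fun x : ℝ => rexp (-(B * (x + d) ^ 2))) = fun x => rexp (-B * (x + d) ^ 2) := by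
        funext x; ring_nf
      rw [this]
      exact (integrable_exp_neg_mul_sq hB).comp_add_right d
    rw [← ofReal_integral_eq_lintegral_ofReal hint (ae_of_all _ (fun x => by positivity))]
    congr 1
    rw [integral_const_mul, integral_const_mul]
    have : (fun x : ℝ => rexp (-(B * (x + d) ^ 2))) = fun x => rexp (-B * (x + d) ^ 2) := by
      funext x; ring_nf
    rw [this, integral_add_right_eq_self (fun x => rexp (-B * x ^ 2)) d, integral_gaussian]
    -- now pure algebra
    rw [h2TB]
    have hexp : E = -(b * a ^ 2 / (2 * T * B)) := by rw [hEdef]; ring_nf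
    have hsq : (Real.sqrt (2 * π * T))⁻¹ * Real.sqrt (π / B) = Real.sqrt (1 / (2 * T * B)) := by
      rw [← Real.sqrt_inv, ← Real.sqrt_mul (by positivity)]
      congr 1
      have hπ : π ≠ 0 := Real.pi_ne_zero
      field_simp
    rw [hexp, ← hsq]
    ring


lemma gauss_pi_exp_sq_lintegral (t : ℝ≥0) (k : ℕ) (b a : ℝ) (hb : 0 ≤ b) (w : Fin k → ℝ) :
    ∫⁻ x : Fin k → ℝ, ENNReal.ofReal (rexp (-(b * (a + ∑ j, w j * x j) ^ 2)))
        ∂(Measure.pi fun _ : Fin k => gaussianReal 0 t)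
      = ENNReal.ofReal (Real.sqrt (1 / (1 + 2 * b * t * ∑ j, w j ^ 2)) *
          rexp (-(b * a ^ 2 / (1 + 2 * b * t * ∑ j, w j ^ 2)))) := by
  induction k generalizing b a with
  | zero =>
      simp only [Finset.univ_eq_empty, Finset.sum_empty, add_zero, mul_zero]
      rw [lintegral_const]
      simp
  | succ k ih =>
      have hmp := (measurePreserving_piFinSuccAbove (fun _ : Fin (k+1) => gaussianReal 0 t) 0).symm
        (MeasurableEquiv.piFinSuccAbove (fun _ : Fin (k+1) => ℝ) 0)
      rw [← hmp.lintegral_comp (meas_aux' b a w)]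
      have heval : ∀ z : ℝ × (Fin k → ℝ),
          ENNReal.ofReal (rexp (-(b * (a + ∑ j, w j *
              ((MeasurableEquiv.piFinSuccAbove (fun _ : Fin (k+1) => ℝ) 0).symm z j)) ^ 2)))
            = ENNReal.ofReal (rexp (-(b * ((a + w 0 * z.1) +
                ∑ j : Fin k, w j.succ * z.2 j) ^ 2))) := by
        intro z
        congr 3
        simp only [MeasurableEquiv.piFinSuccAbove_symm_apply, Fin.insertNthEquiv,
          Equiv.coe_fn_mk, Fin.insertNth_zero', Fin.sum_univ_succ, Fin.cons_zero, Fin.cons_succ]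
        ring
      simp only [heval]
      have hmeas : Measurable fun z : ℝ × (Fin k → ℝ) =>
          ENNReal.ofReal (rexp (-(b * ((a + w 0 * z.1) + ∑ j : Fin k, w j.succ * z.2 j) ^ 2))) := by
        fun_prop
      rw [lintegral_prod _ hmeas.aemeasurable]
      have hinner : ∀ x : ℝ, ∫⁻ y : Fin k → ℝ,
          ENNReal.ofReal (rexp (-(b * ((a + w 0 * x) + ∑ j : Fin k, w j.succ * y j) ^ 2)))
            ∂(Measure.pi fun _ : Fin k => gaussianReal 0 t)
          = ENNReal.ofReal (Real.sqrt (1 / (1 + 2 * b * t * ∑ j : Fin k, w j.succ ^ 2)) *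
              rexp (-(b * (a + w 0 * x) ^ 2 / (1 + 2 * b * t * ∑ j : Fin k, w j.succ ^ 2)))) :=
        fun x => ih b (a + w 0 * x) hb (fun j => w j.succ)
      simp only [hinner]
      set S1 : ℝ := ∑ j : Fin k, w j.succ ^ 2 with hS1
      have hS1nn : 0 ≤ S1 := Finset.sum_nonneg fun j _ => sq_nonneg _
      set D : ℝ := 1 + 2 * b * t * S1 with hDdef
      have hD : (0:ℝ) < D := by positivity
      have hsplit : ∀ x : ℝ, ENNReal.ofReal (Real.sqrt (1 / D) *
            rexp (-(b * (a + w 0 * x) ^ 2 / D)))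
          = ENNReal.ofReal (Real.sqrt (1 / D)) *
            ENNReal.ofReal (rexp (-((b / D) * (a + w 0 * x) ^ 2))) := by
        intro x
        rw [ENNReal.ofReal_mul (Real.sqrt_nonneg _)]
        congr 3
        ring
      simp only [hsplit]
      rw [lintegral_const_mul _ (meas_aux (b / D) a (w 0))]
      rw [gauss_exp_sq_lintegral (b / D) a (w 0) (div_nonneg hb hD.le) t]
      set G : ℝ := 1 + 2 * (b / D) * t * w 0 ^ 2 with hGdef
      have hG : (0:ℝ) < G := by positivity
      have hDG : D * G = 1 + 2 * b * t * ∑ j : Fin (k+1), w j ^ 2 := by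
        rw [Fin.sum_univ_succ, hGdef, hDdef]
        field_simp
        ring
      rw [← ENNReal.ofReal_mul (Real.sqrt_nonneg _), ← hDG]
      congr 1
      have h1 : (1:ℝ) / (D * G) = (1 / D) * (1 / G) := by field_simp
      rw [h1, Real.sqrt_mul (by positivity)]
      have h2 : b / D * a ^ 2 / G = b * a ^ 2 / (D * G) := by
        rw [div_mul_eq_mul_div, div_div]
      rw [h2, mul_assoc]

lemma lintegral_pi_prod_pow {α : Type*} [MeasurableSpace α] (ν : Measure α)
    [IsProbabilityMeasure ν] (g : α → ℝ≥0∞) (hg : Measurable g) :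
    ∀ k : ℕ, ∫⁻ x : Fin k → α, ∏ i, g (x i) ∂(Measure.pi fun _ : Fin k => ν)
      = (∫⁻ a, g a ∂ν) ^ k := by
  intro k
  induction k with
  | zero => simp
  | succ k ih =>
      have hmp := (measurePreserving_piFinSuccAbove (fun _ : Fin (k+1) => ν) 0).symm
        (MeasurableEquiv.piFinSuccAbove (fun _ : Fin (k+1) => α) 0)
      have hF : Measurable fun x : Fin (k+1) → α => ∏ i, g (x i) :=
        Finset.measurable_prod _ (fun i _ => hg.comp (measurable_pi_apply i))
      rw [← hmp.lintegral_comp hF]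
      have heval : ∀ z : α × (Fin k → α),
          (∏ i, g (((MeasurableEquiv.piFinSuccAbove (fun _ : Fin (k+1) => α) 0).symm z) i))
            = g z.1 * ∏ i : Fin k, g (z.2 i) := by
        intro z
        simp only [MeasurableEquiv.piFinSuccAbove_symm_apply, Fin.insertNthEquiv,
          Equiv.coe_fn_mk, Fin.insertNth_zero', Fin.prod_univ_succ, Fin.cons_zero, Fin.cons_succ]
      simp only [heval]
      rw [lintegral_prod_mul (f := g) (g := fun y : Fin k → α => ∏ i, g (y i)) hg.aemeasurable
        (Finset.measurable_prod _ (fun i _ => hg.comp (measurable_pi_apply i))).aemeasurable]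
      rw [ih, pow_succ]
      ring


/-- **Lower tail of the norm of a Gaussian projection** (used in
`lemma: noisy pout tv improved`, Case 1).  For fixed nonzero `v`, `A` with i.i.d. `N(0,1/m)`
entries, `m > 1`, `c ≥ 4`:  `Pr[‖Av‖ ≤ (2/√c) ‖v‖] ≤ (2/√(mπ)) (2e/√c)^m`. -/
theorem gaussian_projection_lower_tail (n m : ℕ) (hm : 1 < m) (c : ℝ) (hc : 4 ≤ c)
    (v : EucSp n) (hv : v ≠ 0) :
    gaussMatrix m n {A | ‖applyMat A v‖ ≤ 2 / Real.sqrt c * ‖v‖}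
      ≤ ENNReal.ofReal (2 / Real.sqrt (m * Real.pi) *
          (2 * Real.exp 1 / Real.sqrt c) ^ m) := by
  have hm0 : (0:ℝ) < m := by positivity
  have hc0 : (0:ℝ) < c := by linarith
  have hsc : (0:ℝ) < Real.sqrt c := Real.sqrt_pos.mpr hc0
  have hV : (0:ℝ) < ‖v‖ ^ 2 := by
    have := norm_pos_iff.mpr hv
    positivity
  set V : ℝ := ‖v‖ ^ 2 with hVdef
  set s : ℝ := c / 4 - 1 with hsdef
  have hs : 0 ≤ s := by rw [hsdef]; linarith
  set b : ℝ := m * s / (2 * V) with hbdef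
  have hb : 0 ≤ b := by positivity
  set r : ℝ := 2 / Real.sqrt c * ‖v‖ with hrdef
  have hr : 0 ≤ r := by positivity
  set t : ℝ≥0 := (m : ℝ≥0)⁻¹ with htdef
  have htr : (t : ℝ) = (m : ℝ)⁻¹ := by push_cast [htdef]; simp
  -- the row functional
  set q : MatR m n → Fin m → ℝ := fun A i => ∑ j, v j * A i j with hqdef
  have happly : ∀ (A : MatR m n) (i : Fin m), applyMat A v i = ∑ j, A i j * v j := fun A i => rfl
  have hnorm : ∀ A : MatR m n, ‖applyMat A v‖ ^ 2 = ∑ i, q A i ^ 2 := by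
    intro A
    rw [EuclideanSpace.norm_eq, Real.sq_sqrt (Finset.sum_nonneg fun i _ => by positivity)]
    refine Finset.sum_congr rfl fun i _ => ?_
    rw [Real.norm_eq_abs, sq_abs, happly, hqdef]
    congr 1
    exact Finset.sum_congr rfl fun j _ => mul_comm _ _
  -- Chernoff functional
  set g : (Fin n → ℝ) → ℝ≥0∞ :=
    fun row => ENNReal.ofReal (rexp (-(b * (∑ j, v j * row j) ^ 2))) with hgdef
  have hgmeas : Measurable g := by rw [hgdef]; fun_prop
  set F : MatR m n → ℝ≥0∞ :=
    fun A => ENNReal.ofReal (rexp (b * r ^ 2)) * ∏ i, g (A i) with hFdef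
  have hFmeas : Measurable fun A : MatR m n => ∏ i, g (A i) :=
    Finset.measurable_prod _ (fun i _ => hgmeas.comp (measurable_pi_apply i))
  have hSmeas : MeasurableSet {A : MatR m n | ‖applyMat A v‖ ≤ r} := by
    have h1 : Measurable fun A : MatR m n => ‖applyMat A v‖ := by
      apply Measurable.norm
      show Measurable fun A : MatR m n => MeasurableEquiv.toLp 2 (Fin m → ℝ)
        (fun i => ∑ j, A i j * (EuclideanSpace.equiv (Fin n) ℝ) v j)
      refine (MeasurableEquiv.toLp 2 (Fin m → ℝ)).measurable.comp
        (measurable_pi_lambda _ ?_)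
      intro i
      show Measurable fun A : MatR m n => ∑ j, A i j * (EuclideanSpace.equiv (Fin n) ℝ) v j
      fun_prop
    exact measurableSet_le h1 measurable_const
  -- pointwise Chernoff bound on the event
  have hpoint : ∀ A ∈ {A : MatR m n | ‖applyMat A v‖ ≤ r}, (1 : ℝ≥0∞) ≤ F A := by
    intro A hA
    have hsum : ∑ i, q A i ^ 2 ≤ r ^ 2 := by
      rw [← hnorm A]
      exact pow_le_pow_left₀ (norm_nonneg _) hA 2
    have hFA : F A = ENNReal.ofReal (rexp (b * r ^ 2) * ∏ i, rexp (-(b * (q A i) ^ 2))) := by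
      rw [ENNReal.ofReal_mul (Real.exp_nonneg _),
        ENNReal.ofReal_prod_of_nonneg (fun i _ => Real.exp_nonneg _)]
    rw [hFA, ← Real.exp_sum, ← Real.exp_add]
    refine ENNReal.one_le_ofReal.mpr (Real.one_le_exp ?_)
    have hns : ∑ i, -(b * q A i ^ 2) = -(b * ∑ i, q A i ^ 2) := by
      rw [Finset.mul_sum, ← Finset.sum_neg_distrib]
    rw [hns]
    nlinarith [mul_nonneg hb (sub_nonneg.mpr hsum)]
  -- Markov / Chernoff step
  have hmarkov : gaussMatrix m n {A | ‖applyMat A v‖ ≤ r} ≤ ∫⁻ A, F A ∂(gaussMatrix m n) := by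
    calc gaussMatrix m n {A | ‖applyMat A v‖ ≤ r}
        = ∫⁻ A in {A | ‖applyMat A v‖ ≤ r}, 1 ∂(gaussMatrix m n) := (setLIntegral_one _).symm
      _ ≤ ∫⁻ A in {A | ‖applyMat A v‖ ≤ r}, F A ∂(gaussMatrix m n) :=
          setLIntegral_mono' hSmeas hpoint
      _ ≤ ∫⁻ A, F A ∂(gaussMatrix m n) := setLIntegral_le_lintegral _ _
  -- compute the integral of F
  have hrow : ∫⁻ row : Fin n → ℝ, g row ∂(Measure.pi fun _ : Fin n => gaussianReal 0 t)
      = ENNReal.ofReal (Real.sqrt (1 / (1 + 2 * b * (t : ℝ) * ∑ j, (v j) ^ 2))) := by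
    have h0 := gauss_pi_exp_sq_lintegral t n b 0 hb (fun j => v j)
    simp only [zero_add, ne_eq, OfNat.ofNat_ne_zero, not_false_eq_true, zero_pow, mul_zero,
      zero_div, neg_zero, Real.exp_zero, mul_one] at h0
    rw [hgdef]
    exact h0
  have hint : ∫⁻ A, F A ∂(gaussMatrix m n)
      = ENNReal.ofReal (rexp (b * r ^ 2)) *
        (ENNReal.ofReal (Real.sqrt (1 / (1 + 2 * b * (t : ℝ) * ∑ j, (v j) ^ 2)))) ^ m := by
    rw [hFdef]
    rw [lintegral_const_mul _ hFmeas]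
    rw [show gaussMatrix m n = Measure.pi fun _ : Fin m => Measure.pi fun _ : Fin n =>
      gaussianReal 0 t from rfl]
    rw [lintegral_pi_prod_pow _ g hgmeas m, hrow]
  -- numerics
  have hsumv : ∑ j, (v j) ^ 2 = V := by
    rw [hVdef, EuclideanSpace.norm_eq, Real.sq_sqrt (Finset.sum_nonneg fun j _ => by positivity)]
    exact (Finset.sum_congr rfl fun j _ => by rw [Real.norm_eq_abs, sq_abs]).symm
  have hkey : 1 + 2 * b * (t : ℝ) * ∑ j, (v j) ^ 2 = c / 4 := by
    rw [hsumv, htr, hbdef, hsdef]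
    have hm' : (m:ℝ) ≠ 0 := ne_of_gt hm0
    have hV' : V ≠ 0 := ne_of_gt hV
    field_simp
    ring
  have hsqrt4 : Real.sqrt 4 = 2 := by
    rw [show (4:ℝ) = 2 ^ 2 by norm_num, Real.sqrt_sq (by norm_num : (0:ℝ) ≤ 2)]
  have hsqrt : Real.sqrt (1 / (c / 4)) = 2 / Real.sqrt c := by
    rw [show (1:ℝ) / (c / 4) = 4 / c by field_simp, Real.sqrt_div (by norm_num : (0:ℝ) ≤ 4) c,
      hsqrt4]
  have hbr : b * r ^ 2 = 2 * m * s / c := by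
    rw [hrdef, hbdef, mul_pow, div_pow, Real.sq_sqrt hc0.le, ← hVdef]
    have hm' : (m:ℝ) ≠ 0 := ne_of_gt hm0
    have hV' : V ≠ 0 := ne_of_gt hV
    field_simp
  have hsmp : (0:ℝ) < Real.sqrt (m * π) := Real.sqrt_pos.mpr (by positivity)
  have e1 : rexp (2 * m * s / c) ≤ rexp ((m:ℝ) / 2) := by
    apply Real.exp_le_exp.mpr
    rw [hsdef, div_le_iff₀ hc0]
    nlinarith
  have e2 : Real.sqrt (m * π) ≤ 2 * rexp ((m:ℝ) / 2) := by
    have h4 : (m:ℝ) * π ≤ (2 * rexp ((m:ℝ) / 2)) ^ 2 := by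
      have hexp := Real.add_one_le_exp ((m:ℝ) / 2)
      have hpi := Real.pi_le_four
      nlinarith [Real.exp_pos ((m:ℝ) / 2), Real.pi_pos]
    calc Real.sqrt (m * π) ≤ Real.sqrt ((2 * rexp ((m:ℝ) / 2)) ^ 2) := Real.sqrt_le_sqrt h4
      _ = 2 * rexp ((m:ℝ) / 2) := Real.sqrt_sq (by positivity)
  have e3 : rexp ((m:ℝ) / 2) ≤ 2 / Real.sqrt (m * π) * rexp 1 ^ m := by
    rw [Real.exp_one_pow, div_mul_eq_mul_div, le_div_iff₀ hsmp]
    have hsplit : rexp (m:ℝ) = rexp ((m:ℝ) / 2) * rexp ((m:ℝ) / 2) := by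
      rw [← Real.exp_add]; ring_nf
    rw [hsplit]
    calc rexp ((m:ℝ) / 2) * Real.sqrt (m * π)
        ≤ rexp ((m:ℝ) / 2) * (2 * rexp ((m:ℝ) / 2)) :=
          mul_le_mul_of_nonneg_left e2 (Real.exp_pos _).le
      _ = 2 * (rexp ((m:ℝ) / 2) * rexp ((m:ℝ) / 2)) := by ring
  have hfinal : rexp (2 * m * s / c) * (2 / Real.sqrt c) ^ m
      ≤ 2 / Real.sqrt (m * π) * (2 * rexp 1 / Real.sqrt c) ^ m := by
    calc rexp (2 * m * s / c) * (2 / Real.sqrt c) ^ m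
        ≤ (2 / Real.sqrt (m * π) * rexp 1 ^ m) * (2 / Real.sqrt c) ^ m :=
          mul_le_mul_of_nonneg_right (e1.trans e3) (by positivity)
      _ = 2 / Real.sqrt (m * π) * (2 * rexp 1 / Real.sqrt c) ^ m := by
          rw [show (2:ℝ) * rexp 1 / Real.sqrt c = rexp 1 * (2 / Real.sqrt c) by ring, mul_pow]
          ring
  calc gaussMatrix m n {A | ‖applyMat A v‖ ≤ r} ≤ ∫⁻ A, F A ∂(gaussMatrix m n) := hmarkov
    _ = ENNReal.ofReal (rexp (2 * m * s / c) * (2 / Real.sqrt c) ^ m) := by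
        rw [hint, hkey, hbr, hsqrt, ← ENNReal.ofReal_pow (by positivity),
          ← ENNReal.ofReal_mul (Real.exp_nonneg _)]
    _ ≤ ENNReal.ofReal (2 / Real.sqrt (m * π) * (2 * rexp 1 / Real.sqrt c) ^ m) :=
        ENNReal.ofReal_le_ofReal hfinal


end
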